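/- Let U ⊆ ℂⁿ be a bounded open connected set, g ∈ ℂ, ξ ∈ U ∩ 𝕌ⁿ, and ε > 0. Then there exists a constant A > 0 such that |â^cs_ν(ξ;k^(c))| ≤ A·e^{ε⟨ν,ρ⟩} for all c ≥ 0 and all ν ∈ ℤⁿ with ν ≥ 0. -/

import Mathlib

open scoped BigOperators
open Finset Filter Topology

noncomputable section

namespace TodaBC

variable {n : ℕ}

/-- The bilinear pairing `⟨ξ,x⟩ = ∑_j ξ_j x_j` on `ℂⁿ`. -/
def pc (ξ x : Fin n → ℂ) : ℂ := ∑ j, ξ j * x j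

/-- Complexification of an integer vector. -/
def zc (ν : Fin n → ℤ) : Fin n → ℂ := fun j => (ν j : ℂ)

/-- Complexification of a real vector. -/
def cr (x : Fin n → ℝ) : Fin n → ℂ := fun j => (x j : ℂ)

/-- `ρ = (n, n-1, …, 1)` as a complex vector (0-indexed: `ρ_j = n - j`). -/
def rhoC (n : ℕ) : Fin n → ℂ := fun j => ((n - (j : ℕ) : ℕ) : ℂ)

/-- `ρ = (n, n-1, …, 1)` as a real vector. -/
def rhoR (n : ℕ) : Fin n → ℝ := fun j => ((n - (j : ℕ) : ℕ) : ℝ)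

/-- `⟨ν,ρ⟩` for an integer vector `ν`. -/
def rp (ν : Fin n → ℤ) : ℤ := ∑ j, ν j * ((n : ℤ) - ((j : ℕ) : ℤ))

/-- `ν ≥ 0` : all initial partial sums of `ν` are nonnegative. -/
def dominant (ν : Fin n → ℤ) : Prop := ∀ k : Fin n, 0 ≤ ∑ j ∈ Finset.Iic k, ν j

/-- The domain `𝕌ⁿ = {ξ ∈ ℂⁿ ∣ ⟨ν-2ξ,ν⟩ ≠ 0 for all ν > 0}`. -/
def Uset (n : ℕ) : Set (Fin n → ℂ) :=
  {ξ | ∀ ν : Fin n → ℤ, dominant ν → ν ≠ 0 → pc (zc ν - 2 • ξ) (zc ν) ≠ 0}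

/-- Standard basis vector of `ℤⁿ` with (0-based) index `k`. -/
def eZ (n : ℕ) (k : ℕ) : Fin n → ℤ := fun i => if (i : ℕ) = k then 1 else 0

/-- RHS of the Toda Harish-Chandra recurrence: `∑_{α ∈ S} a_α a_{ν-α}`. -/
def todaRHS (g : ℂ) (a : (Fin n → ℤ) → ℂ) (ν : Fin n → ℤ) : ℂ :=
  (∑ k ∈ Finset.range (n - 1), 2 * a (ν - (eZ n k - eZ n (k + 1))))
    + g * a (ν - eZ n (n - 1)) + (1 / 4) * a (ν - 2 • eZ n (n - 1))

/-- `a` is the family of Harish-Chandra coefficients `ν ↦ a_ν(ξ;g)`. -/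
def IsHC (g : ℂ) (ξ : Fin n → ℂ) (a : (Fin n → ℤ) → ℂ) : Prop :=
  a 0 = 1 ∧ (∀ ν, ¬ dominant ν → a ν = 0) ∧
    ∀ ν, dominant ν → ν ≠ 0 →
      a ν = (pc (zc ν - 2 • ξ) (zc ν))⁻¹ * todaRHS g a ν

/-- Term of the Harish-Chandra series: `a_ν e^{⟨ξ-ν,x⟩}`. -/
def hcTerm (a : (Fin n → ℤ) → ℂ) (ξ x : Fin n → ℂ) (ν : Fin n → ℤ) : ℂ :=
  a ν * Complex.exp (pc (ξ - zc ν) x)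

/-- The Toda + Morse potential `∑_{α ∈ S} a_α e^{-⟨α,x⟩}`. -/
def potential (n : ℕ) (g : ℂ) (x : Fin n → ℂ) : ℂ :=
  (∑ k ∈ Finset.range (n - 1), 2 * Complex.exp (- pc (zc (eZ n k - eZ n (k + 1))) x))
    + g * Complex.exp (- pc (zc (eZ n (n - 1))) x)
    + (1 / 4) * Complex.exp (- pc (zc (2 • eZ n (n - 1))) x)

/-- `∂²f/∂x_j²` evaluated at `x`. -/
def secondPartial (f : (Fin n → ℂ) → ℂ) (j : Fin n) (x : Fin n → ℂ) : ℂ :=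
  iteratedDeriv 2 (fun s => f (Function.update x j s)) (x j)

/-- `ℂⁿ_{reg,+}`. -/
def regPlus (n : ℕ) : Set (Fin n → ℂ) :=
  {ξ | (∀ j, ∀ m : ℤ, 0 < m → 2 * ξ j ≠ (m : ℂ)) ∧
    ∀ j k : Fin n, j < k → ∀ m : ℤ, 0 < m → ξ j + ξ k ≠ (m : ℂ) ∧ ξ j - ξ k ≠ (m : ℂ)}

/-- `ℂⁿ_{reg}`. -/
def regSet (n : ℕ) : Set (Fin n → ℂ) :=
  {ξ | (∀ j, ∀ m : ℤ, 2 * ξ j ≠ (m : ℂ)) ∧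
    ∀ j k : Fin n, j < k → ∀ m : ℤ, ξ j + ξ k ≠ (m : ℂ) ∧ ξ j - ξ k ≠ (m : ℂ)}

/-- `ℂⁿ_{reg,-}`. -/
def regMinus (n : ℕ) : Set (Fin n → ℂ) :=
  {ξ | (∀ j, ∀ m : ℤ, m ≤ 0 → 2 * ξ j ≠ (m : ℂ)) ∧
    ∀ j k : Fin n, j < k → ∀ m : ℤ, m ≤ 0 → ξ j + ξ k ≠ (m : ℂ) ∧ ξ j - ξ k ≠ (m : ℂ)}

/-- The condition `x_k - x_{k+1} ≥ R` for `k = 1,…,n` (with `x_{n+1} = 0`). -/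
def spaced (n : ℕ) (R : ℝ) (x : Fin n → ℝ) : Prop :=
  ∀ k : Fin n, (if h : (k : ℕ) + 1 < n then x ⟨(k : ℕ) + 1, h⟩ else 0) + R ≤ x k

/-- The Toda `c`-function `C(ξ;g)`. -/
def Cfun (g : ℂ) (ξ : Fin n → ℂ) : ℂ :=
  (∏ j, Complex.Gamma (2 * ξ j) / Complex.Gamma (1 / 2 + g + ξ j)) *
    ∏ j, ∏ k ∈ Finset.Ioi j, Complex.Gamma (ξ j + ξ k) * Complex.Gamma (ξ j - ξ k)

/-- Action of the signed permutation `(σ,ε)` on `ℂⁿ`: `(wξ)_j = ε_j ξ_{σ_j}`. -/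
def wAct (σ : Equiv.Perm (Fin n)) (ε : Fin n → Bool) (ξ : Fin n → ℂ) : Fin n → ℂ :=
  fun j => (if ε j then 1 else -1) * ξ (σ j)

/-- The hyperoctahedral Whittaker function `Φ_ξ(x;g) = ∑_{w ∈ W} C(wξ;g) φ_{wξ}(x;g)`,
built from an extension `F` of the fundamental Whittaker function. -/
def PhiOf (F : (Fin n → ℂ) → (Fin n → ℂ) → ℂ → ℂ) (g : ℂ) (ξ x : Fin n → ℂ) : ℂ :=
  ∑ σ : Equiv.Perm (Fin n), ∑ ε : Fin n → Bool,
    Cfun g (wAct σ ε ξ) * F (wAct σ ε ξ) x g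

/-- `F` is the holomorphic extension, to `ℂⁿ_{reg,+} × ℂⁿ × ℂ`, of the fundamental Whittaker
function attached to the coefficient family `a`. -/
def IsPhiExt (n : ℕ) (a : (Fin n → ℂ) → ℂ → (Fin n → ℤ) → ℂ)
    (F : (Fin n → ℂ) → (Fin n → ℂ) → ℂ → ℂ) : Prop :=
  DifferentiableOn ℂ (fun p : (Fin n → ℂ) × (Fin n → ℂ) × ℂ => F p.1 p.2.1 p.2.2)
      ((regPlus n) ×ˢ (Set.univ : Set (Fin n → ℂ)) ×ˢ (Set.univ : Set ℂ)) ∧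
    ∀ ξ ∈ Uset n ∩ regPlus n, ∀ x : Fin n → ℂ, ∀ g : ℂ,
      HasSum (fun ν : Fin n → ℤ => hcTerm (a ξ g) ξ x ν) (F ξ x g)

/-- Sign vector with value `+1` on `P`, `-1` on `M`, `0` elsewhere. -/
def es (P M : Finset (Fin n)) (j : Fin n) : ℂ :=
  if j ∈ P then 1 else if j ∈ M then -1 else 0

/-- The coefficient `V_{εJ}(ξ;g)` where `J = P ∪ M`, `ε = +1` on `P` and `-1` on `M`. -/
def Vco (g : ℂ) (ξ : Fin n → ℂ) (P M : Finset (Fin n)) : ℂ :=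
  (∏ j ∈ P ∪ M, (1 / 2 + g + es P M j * ξ j) / (2 * ξ j * (2 * ξ j + es P M j)))
    * (∏ j ∈ P ∪ M, ∏ k ∈ (P ∪ M)ᶜ, (ξ j ^ 2 - ξ k ^ 2)⁻¹)
    * ∏ j ∈ P ∪ M, ∏ j' ∈ (P ∪ M).filter (fun j' => j < j'),
        (es P M j * ξ j + es P M j' * ξ j')⁻¹ * (1 + es P M j * ξ j + es P M j' * ξ j')⁻¹

/-- The coefficient `U_{K,p}(ξ;g)`. -/
def Uco (g : ℂ) (ξ : Fin n → ℂ) (K : Finset (Fin n)) (p : ℕ) : ℂ :=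
  (-1 : ℂ) ^ (p * (p + 1) / 2) *
    ∑ P : Finset (Fin n), ∑ M : Finset (Fin n),
      if P ⊆ K ∧ M ⊆ K ∧ Disjoint P M ∧ P.card + M.card = p then
        (∏ i ∈ P ∪ M, (1 / 2 + g + es P M i * ξ i) / (2 * ξ i * (2 * ξ i + es P M i)))
          * (∏ i ∈ P ∪ M, ∏ k ∈ K \ (P ∪ M), (ξ i ^ 2 - ξ k ^ 2)⁻¹)
          * ∏ i ∈ P ∪ M, ∏ i' ∈ (P ∪ M).filter (fun i' => i < i'),
              (es P M i * ξ i + es P M i' * ξ i')⁻¹ *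
                (1 + es P M i * ξ i + es P M i' * ξ i')⁻¹
      else 0

/-- LHS of the dual difference equation of order `ℓ`, applied to a function `Φf` of the
spectral variable. -/
def diffLHS (g : ℂ) (ℓ : ℕ) (ξ : Fin n → ℂ) (Φf : (Fin n → ℂ) → ℂ) : ℂ :=
  ∑ P : Finset (Fin n), ∑ M : Finset (Fin n),
    if Disjoint P M ∧ P.card + M.card ≤ ℓ then
      Uco g ξ (P ∪ M)ᶜ (ℓ - (P.card + M.card)) * Vco g ξ P M * Φf (ξ + es P M)
    else 0

/-- The set of linear forms `ξ ↦ 2ξ_j`, `ξ ↦ ξ_j ± ξ_k` (`j < k`). -/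
def LinForms (n : ℕ) : Set ((Fin n → ℂ) → ℂ) :=
  {L | (∃ j, L = fun ξ => 2 * ξ j) ∨
    ∃ j k : Fin n, j < k ∧ ((L = fun ξ => ξ j + ξ k) ∨ L = fun ξ => ξ j - ξ k)}

/-- Exponential damping factor `e^{-c·l·⟨α,ρ⟩}`. -/
def damp (n : ℕ) (c : ℝ) (l : ℕ) (α : Fin n → ℤ) : ℂ :=
  Complex.exp (((-(c * (l : ℝ) * ((rp α : ℤ) : ℝ))) : ℝ) : ℂ)

/-- RHS of the (rescaled) Calogero–Sutherland Harish-Chandra recurrence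
`∑_{α ∈ R₊} ∑_{l ≥ 1} l e^{-c l ⟨α,ρ⟩} a^{cs}_α(k) a_{ν - lα}` (a finite sum since the
terms with `l > ⟨ν,ρ⟩` vanish). -/
def csRHS (k : ℂ × ℂ × ℂ) (c : ℝ) (a : (Fin n → ℤ) → ℂ) (ν : Fin n → ℤ) : ℂ :=
  ∑ l ∈ Finset.Icc 1 (rp ν).toNat, (l : ℂ) *
    ((∑ j : Fin n, damp n c l (eZ n (j : ℕ)) * (k.2.1 * (k.2.1 + 2 * k.2.2 - 1)) *
        a (ν - l • eZ n (j : ℕ)))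
      + (∑ j : Fin n, damp n c l (2 • eZ n (j : ℕ)) * (4 * k.2.2 * (k.2.2 - 1)) *
          a (ν - l • (2 • eZ n (j : ℕ))))
      + ∑ j : Fin n, ∑ j' ∈ Finset.Ioi j,
          (damp n c l (eZ n (j : ℕ) + eZ n (j' : ℕ)) * (2 * k.1 * (k.1 - 1)) *
              a (ν - l • (eZ n (j : ℕ) + eZ n (j' : ℕ)))
            + damp n c l (eZ n (j : ℕ) - eZ n (j' : ℕ)) * (2 * k.1 * (k.1 - 1)) *
                a (ν - l • (eZ n (j : ℕ) - eZ n (j' : ℕ)))))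

/-- `a` is the family of Calogero–Sutherland Harish-Chandra coefficients `ν ↦ a^{cs}_ν(ξ;k)`. -/
def IsHCcs (k : ℂ × ℂ × ℂ) (ξ : Fin n → ℂ) (a : (Fin n → ℤ) → ℂ) : Prop :=
  a 0 = 1 ∧ (∀ ν, ¬ dominant ν → a ν = 0) ∧
    ∀ ν, dominant ν → ν ≠ 0 → pc (zc ν - 2 • ξ) (zc ν) * a ν = csRHS k 0 a ν

/-- `a` is the family of rescaled coefficients `ν ↦ â^{cs}_ν(ξ;k)` (with damping `c` and
initial value `Δval`). -/
def IsHCcsResc (k : ℂ × ℂ × ℂ) (c : ℝ) (Δval : ℂ) (ξ : Fin n → ℂ)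
    (a : (Fin n → ℤ) → ℂ) : Prop :=
  a 0 = Δval ∧ (∀ ν, ¬ dominant ν → a ν = 0) ∧
    ∀ ν, dominant ν → ν ≠ 0 → pc (zc ν - 2 • ξ) (zc ν) * a ν = csRHS k c a ν

/-- The open Weyl chamber `𝔸ⁿ = {x ∈ ℝⁿ ∣ x₁ > x₂ > ⋯ > xₙ > 0}`. -/
def Achamber (n : ℕ) : Set (Fin n → ℝ) :=
  {x | (∀ j k : Fin n, j < k → x k < x j) ∧ ∀ j, 0 < x j}

/-- The coupling parameters `k^{(c)} = (k₀^{(c)}, 2g, k₂^{(c)})` with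
`k₀^{(c)}(k₀^{(c)}-1) = e^c`, `k₂^{(c)}(k₂^{(c)}-1) = e^{2c}/16`, `k₀^{(c)}, k₂^{(c)} > 0`. -/
def kParam (g : ℂ) (c : ℝ) : ℂ × ℂ × ℂ :=
  ((((1 + Real.sqrt (1 + 4 * Real.exp c)) / 2 : ℝ) : ℂ), 2 * g,
    (((1 + Real.sqrt (1 + Real.exp c ^ 2 / 4)) / 2 : ℝ) : ℂ))

/-- The Calogero–Sutherland `c`-function `C^{cs}(ξ;k)`. -/
def Ccs (k : ℂ × ℂ × ℂ) (ξ : Fin n → ℂ) : ℂ :=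
  (∏ j, Complex.Gamma (2 * ξ j) * Complex.Gamma (k.2.1 / 2 + ξ j) /
      (Complex.Gamma (k.2.1 + 2 * ξ j) * Complex.Gamma (k.2.1 / 2 + k.2.2 + ξ j))) *
    ∏ j, ∏ k' ∈ Finset.Ioi j,
      Complex.Gamma (ξ j + ξ k') * Complex.Gamma (ξ j - ξ k') /
        (Complex.Gamma (k.1 + ξ j + ξ k') * Complex.Gamma (k.1 + ξ j - ξ k'))

/-- The normalization constant `γ(k)`. -/
def gammaNorm (n : ℕ) (k : ℂ × ℂ × ℂ) : ℂ :=
  Complex.Gamma k.1 ^ (n * (n - 1)) *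
    (Complex.Gamma k.2.1 * Complex.Gamma (k.2.1 / 2 + k.2.2) /
      (Complex.Gamma (k.2.1 / 2) * Complex.Gamma (1 / 2 + k.2.1 / 2))) ^ n


/-! ### Auxiliary lemmas for `statement17` -/

section Aux17

/-- Partial sum of the first `m` entries. -/
def pSum (ν : Fin n → ℤ) (m : ℕ) : ℤ :=
  ∑ i ∈ Finset.univ.filter (fun i : Fin n => (i : ℕ) < m), ν i

lemma pSum_zero (ν : Fin n → ℤ) : pSum ν 0 = 0 := by
  simp [pSum]

lemma pSum_succ (ν : Fin n → ℤ) (m : ℕ) (h : m < n) :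
    pSum ν (m + 1) = pSum ν m + ν ⟨m, h⟩ := by
  classical
  have hsplit : (Finset.univ.filter (fun i : Fin n => (i : ℕ) < m + 1))
      = insert (⟨m, h⟩ : Fin n) (Finset.univ.filter (fun i : Fin n => (i : ℕ) < m)) := by
    ext i
    simp only [Finset.mem_filter, Finset.mem_univ, true_and, Finset.mem_insert]
    constructor
    · intro hi
      rcases Nat.lt_succ_iff_lt_or_eq.mp hi with hi | hi
      · exact Or.inr hi
      · exact Or.inl (Fin.ext hi)
    · rintro (rfl | hi)
      · exact Nat.lt_succ_self m
      · exact Nat.lt_succ_of_lt hi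
  have hnot : (⟨m, h⟩ : Fin n) ∉ Finset.univ.filter (fun i : Fin n => (i : ℕ) < m) := by
    simp
  rw [pSum, pSum, hsplit, Finset.sum_insert hnot, add_comm]

lemma pSum_eq_sum_Iic (ν : Fin n → ℤ) (k : Fin n) :
    pSum ν ((k : ℕ) + 1) = ∑ i ∈ Finset.Iic k, ν i := by
  unfold pSum
  apply Finset.sum_congr _ (fun _ _ => rfl)
  ext i
  simp only [Finset.mem_filter, Finset.mem_univ, true_and, Finset.mem_Iic, Fin.le_def]
  omega

lemma pSum_nonneg {ν : Fin n → ℤ} (hν : dominant ν) (m : ℕ) : 0 ≤ pSum ν m := by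
  rcases Nat.eq_zero_or_pos m with rfl | hm
  · simp [pSum_zero]
  · by_cases hmn : m ≤ n
    · have h : m - 1 < n := by omega
      have hmm : ((⟨m - 1, h⟩ : Fin n) : ℕ) + 1 = m := by
        show m - 1 + 1 = m; omega
      have : pSum ν m = pSum ν (((⟨m - 1, h⟩ : Fin n) : ℕ) + 1) := by rw [hmm]
      rw [this, pSum_eq_sum_Iic]
      exact hν _
    · rcases Nat.eq_zero_or_pos n with hn0 | hn0
      · have h0 : pSum ν m = 0 := by
          unfold pSum
          apply Finset.sum_eq_zero
          intro i _
          exact absurd i.isLt (by omega)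
        rw [h0]
      · have h : n - 1 < n := by omega
        have heq : pSum ν m = pSum ν (((⟨n - 1, h⟩ : Fin n) : ℕ) + 1) := by
          unfold pSum
          apply Finset.sum_congr _ (fun _ _ => rfl)
          ext i
          simp only [Finset.mem_filter, Finset.mem_univ, true_and]
          have := i.isLt
          omega
        rw [heq, pSum_eq_sum_Iic]
        exact hν _

lemma rp_eq_sum_pSum (ν : Fin n → ℤ) : rp ν = ∑ k : Fin n, pSum ν ((k : ℕ) + 1) := by
  classical
  have h1 : ∀ k : Fin n, pSum ν ((k : ℕ) + 1) = ∑ i ∈ Finset.Iic k, ν i :=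
    pSum_eq_sum_Iic ν
  calc rp ν = ∑ i : Fin n, ∑ _k ∈ Finset.Ici i, ν i := by
        unfold rp
        apply Finset.sum_congr rfl
        intro i _
        rw [Finset.sum_const, Fin.card_Ici, nsmul_eq_mul, mul_comm]
        congr 1
        have := i.isLt
        push_cast [Nat.cast_sub this.le]
        ring
    _ = ∑ k : Fin n, ∑ i ∈ Finset.Iic k, ν i := by
        refine Finset.sum_comm' ?_
        intro i k
        simp [Finset.mem_Iic, Finset.mem_Ici]
    _ = ∑ k : Fin n, pSum ν ((k : ℕ) + 1) := by
        exact (Finset.sum_congr rfl fun k _ => (h1 k).symm)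

lemma rp_nonneg {ν : Fin n → ℤ} (hν : dominant ν) : 0 ≤ rp ν := by
  rw [rp_eq_sum_pSum]
  exact Finset.sum_nonneg fun k _ => pSum_nonneg hν _

lemma pSum_le_rp {ν : Fin n → ℤ} (hν : dominant ν) (m : ℕ) : pSum ν m ≤ rp ν := by
  rcases Nat.eq_zero_or_pos m with rfl | hm
  · rw [pSum_zero]; exact rp_nonneg hν
  · by_cases hmn : m ≤ n
    · have h : m - 1 < n := by omega
      have hmm : ((⟨m - 1, h⟩ : Fin n) : ℕ) + 1 = m := by
        show m - 1 + 1 = m; omega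
      have heq : pSum ν m = pSum ν (((⟨m - 1, h⟩ : Fin n) : ℕ) + 1) := by rw [hmm]
      rw [heq, rp_eq_sum_pSum]
      exact Finset.single_le_sum (f := fun k : Fin n => pSum ν ((k : ℕ) + 1))
        (fun k _ => pSum_nonneg hν _) (Finset.mem_univ _)
    · rcases Nat.eq_zero_or_pos n with hn0 | hn0
      · have h0 : pSum ν m = 0 := by
          unfold pSum
          apply Finset.sum_eq_zero
          intro i _
          exact absurd i.isLt (by omega)
        rw [h0]
        exact rp_nonneg hν
      · have h : n - 1 < n := by omega
        have heq : pSum ν m = pSum ν (((⟨n - 1, h⟩ : Fin n) : ℕ) + 1) := by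
          unfold pSum
          apply Finset.sum_congr _ (fun _ _ => rfl)
          ext i
          simp only [Finset.mem_filter, Finset.mem_univ, true_and]
          have := i.isLt
          omega
        rw [heq, rp_eq_sum_pSum]
        exact Finset.single_le_sum (f := fun k : Fin n => pSum ν ((k : ℕ) + 1))
          (fun k _ => pSum_nonneg hν _) (Finset.mem_univ _)

lemma abs_entry_le_rp {ν : Fin n → ℤ} (hν : dominant ν) (j : Fin n) :
    |ν j| ≤ rp ν := by
  have h1 : pSum ν ((j : ℕ) + 1) = pSum ν (j : ℕ) + ν j := by
    have := pSum_succ ν (j : ℕ) j.isLt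
    simpa using this
  have h2 := pSum_nonneg hν (j : ℕ)
  have h3 := pSum_nonneg hν ((j : ℕ) + 1)
  have h4 := pSum_le_rp hν (j : ℕ)
  have h5 := pSum_le_rp hν ((j : ℕ) + 1)
  rw [abs_le]
  omega

lemma eq_zero_of_rp_eq_zero {ν : Fin n → ℤ} (hν : dominant ν) (h : rp ν = 0) :
    ν = 0 := by
  funext j
  have := abs_entry_le_rp hν j
  rw [h] at this
  simpa using abs_nonpos_iff.mp this

lemma rp_sub (ν α : Fin n → ℤ) : rp (ν - α) = rp ν - rp α := by
  unfold rp
  rw [← Finset.sum_sub_distrib]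
  apply Finset.sum_congr rfl
  intro j _
  simp [sub_mul]

lemma rp_add (ν α : Fin n → ℤ) : rp (ν + α) = rp ν + rp α := by
  unfold rp
  rw [← Finset.sum_add_distrib]
  apply Finset.sum_congr rfl
  intro j _
  simp [add_mul]

lemma rp_nsmul (α : Fin n → ℤ) (l : ℕ) : rp (l • α) = l * rp α := by
  unfold rp
  rw [Finset.mul_sum]
  apply Finset.sum_congr rfl
  intro j _
  simp [mul_assoc]

lemma rp_sub_nsmul (ν α : Fin n → ℤ) (l : ℕ) :
    rp (ν - l • α) = rp ν - l * rp α := by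
  rw [rp_sub, rp_nsmul]

lemma rp_eZ (k : ℕ) (hk : k < n) : rp (eZ n k) = (n : ℤ) - k := by
  unfold rp eZ
  rw [Finset.sum_eq_single (⟨k, hk⟩ : Fin n)]
  · simp
  · intro b _ hb
    have : (b : ℕ) ≠ k := fun h => hb (Fin.ext h)
    simp [this]
  · intro h
    exact absurd (Finset.mem_univ _) h

lemma rp_eZ_pos (j : Fin n) : 1 ≤ rp (eZ n (j : ℕ)) := by
  rw [rp_eZ _ j.isLt]
  have := j.isLt
  omega

lemma rp_two_eZ (j : Fin n) : rp ((2 : ℕ) • eZ n (j : ℕ)) = 2 * ((n : ℤ) - j) := by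
  rw [rp_nsmul, rp_eZ _ j.isLt]
  push_cast
  ring

lemma rp_sum_eZ_pos (j j' : Fin n) : 1 ≤ rp (eZ n (j : ℕ) + eZ n (j' : ℕ)) := by
  rw [rp_add, rp_eZ _ j.isLt, rp_eZ _ j'.isLt]
  have := j.isLt
  have := j'.isLt
  omega

lemma rp_diff_eZ_pos (j j' : Fin n) (h : j < j') :
    1 ≤ rp (eZ n (j : ℕ) - eZ n (j' : ℕ)) := by
  rw [rp_sub, rp_eZ _ j.isLt, rp_eZ _ j'.isLt]
  have : (j : ℕ) < (j' : ℕ) := h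
  omega

lemma damp_norm (c : ℝ) (l : ℕ) (α : Fin n → ℤ) :
    ‖damp n c l α‖ = Real.exp (-(c * l * ((rp α : ℤ) : ℝ))) := by
  unfold damp
  rw [Complex.norm_exp]
  simp

lemma damp_norm_le (c : ℝ) (hc : 0 ≤ c) (l : ℕ) (hl : 1 ≤ l) (α : Fin n → ℤ)
    (hα : 1 ≤ rp α) : ‖damp n c l α‖ ≤ Real.exp (-c) := by
  rw [damp_norm]
  apply Real.exp_le_exp.mpr
  have h1 : (1 : ℝ) ≤ (l : ℝ) := by exact_mod_cast hl
  have h2 : (1 : ℝ) ≤ ((rp α : ℤ) : ℝ) := by exact_mod_cast hα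
  have h3 : (1 : ℝ) ≤ (l : ℝ) * ((rp α : ℤ) : ℝ) := by nlinarith
  nlinarith [mul_nonneg hc (sub_nonneg.mpr h3)]

/-- Uniform bound for the coupling coefficients of the three root types. -/
def Bg (g : ℂ) : ℝ := 2 * ‖g‖ * (2 * ‖g‖ + 3) + ‖g‖ + 3

lemma Bg_pos (g : ℂ) : 0 < Bg g := by
  have := norm_nonneg g
  unfold Bg
  nlinarith

lemma kP2_eq (c : ℝ) (g : ℂ) :
    4 * (kParam g c).2.2 * ((kParam g c).2.2 - 1)
      = ((Real.exp (2 * c) / 4 : ℝ) : ℂ) := by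
  unfold kParam
  have h0 : (0 : ℝ) ≤ 1 + Real.exp c ^ 2 / 4 := by positivity
  have hs : Real.sqrt (1 + Real.exp c ^ 2 / 4) ^ 2 = 1 + Real.exp c ^ 2 / 4 :=
    Real.sq_sqrt h0
  have hre : (4 : ℝ) * ((1 + Real.sqrt (1 + Real.exp c ^ 2 / 4)) / 2) *
      ((1 + Real.sqrt (1 + Real.exp c ^ 2 / 4)) / 2 - 1) = Real.exp (2 * c) / 4 := by
    have h2 : Real.exp (2 * c) = Real.exp c ^ 2 := by
      rw [← Real.exp_nat_mul]
      norm_num [mul_comm]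
    nlinarith [hs]
  push_cast [← hre]
  ring

lemma kP0_eq (c : ℝ) (g : ℂ) :
    2 * (kParam g c).1 * ((kParam g c).1 - 1) = ((2 * Real.exp c : ℝ) : ℂ) := by
  unfold kParam
  have h0 : (0 : ℝ) ≤ 1 + 4 * Real.exp c := by positivity
  have hs : Real.sqrt (1 + 4 * Real.exp c) ^ 2 = 1 + 4 * Real.exp c :=
    Real.sq_sqrt h0
  have hre : (2 : ℝ) * ((1 + Real.sqrt (1 + 4 * Real.exp c)) / 2) *
      ((1 + Real.sqrt (1 + 4 * Real.exp c)) / 2 - 1) = 2 * Real.exp c := by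
    nlinarith [hs]
  push_cast [← hre]
  ring

lemma kP2_bound (c : ℝ) (g : ℂ) :
    ‖(kParam g c).2.2‖ ≤ 1 + Real.exp c / 4 := by
  unfold kParam
  have h1 : Real.sqrt (1 + Real.exp c ^ 2 / 4) ≤ 1 + Real.exp c / 2 := by
    rw [show (1 : ℝ) + Real.exp c / 2 = Real.sqrt ((1 + Real.exp c / 2) ^ 2) from
      (Real.sqrt_sq (by positivity)).symm]
    apply Real.sqrt_le_sqrt
    nlinarith [Real.exp_pos c]
  have h2 : (0 : ℝ) ≤ (1 + Real.sqrt (1 + Real.exp c ^ 2 / 4)) / 2 := by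
    positivity
  rw [Complex.norm_real, Real.norm_eq_abs, abs_of_nonneg h2]
  nlinarith

lemma kP1_bound (c : ℝ) (g : ℂ) :
    ‖(kParam g c).2.1 * ((kParam g c).2.1 + 2 * (kParam g c).2.2 - 1)‖
      ≤ 2 * ‖g‖ * (2 * ‖g‖ + 3) + ‖g‖ * Real.exp c := by
  have hg : ‖(kParam g c).2.1‖ = 2 * ‖g‖ := by
    unfold kParam
    simp [norm_mul]
  have h2 := kP2_bound c g
  calc ‖(kParam g c).2.1 * ((kParam g c).2.1 + 2 * (kParam g c).2.2 - 1)‖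
      = ‖(kParam g c).2.1‖ * ‖(kParam g c).2.1 + 2 * (kParam g c).2.2 - 1‖ :=
        norm_mul _ _
    _ ≤ 2 * ‖g‖ * (2 * ‖g‖ + 2 * (1 + Real.exp c / 4) + 1) := by
        rw [hg]
        apply mul_le_mul_of_nonneg_left _ (by positivity)
        calc ‖(kParam g c).2.1 + 2 * (kParam g c).2.2 - 1‖
            ≤ ‖(kParam g c).2.1‖ + ‖2 * (kParam g c).2.2‖ + ‖(1 : ℂ)‖ :=
              norm_sub_le _ _ |>.trans (by
                gcongr
                exact norm_add_le _ _)
          _ ≤ 2 * ‖g‖ + 2 * (1 + Real.exp c / 4) + 1 := by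
              rw [hg]
              gcongr
              · rw [norm_mul]
                simpa using mul_le_mul_of_nonneg_left h2 (by norm_num : (0:ℝ) ≤ 2)
              · simp
    _ = 2 * ‖g‖ * (2 * ‖g‖ + 3) + ‖g‖ * Real.exp c := by ring

lemma bound_type1 (g : ℂ) (c : ℝ) (hc : 0 ≤ c) (l : ℕ) (hl : 1 ≤ l) (j : Fin n) :
    ‖damp n c l (eZ n (j : ℕ))‖ *
      ‖(kParam g c).2.1 * ((kParam g c).2.1 + 2 * (kParam g c).2.2 - 1)‖ ≤ Bg g := by
  have h1 := damp_norm_le c hc l hl (eZ n (j : ℕ)) (rp_eZ_pos j)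
  have h2 := kP1_bound c g
  have he1 : Real.exp (-c) ≤ 1 := Real.exp_le_one_iff.mpr (by linarith)
  have he2 : Real.exp (-c) * Real.exp c = 1 := by
    rw [← Real.exp_add]; simp
  have hd0 : (0 : ℝ) ≤ ‖damp n c l (eZ n (j : ℕ))‖ := norm_nonneg _
  have hK0 : (0 : ℝ) ≤ ‖(kParam g c).2.1 * ((kParam g c).2.1 + 2 * (kParam g c).2.2 - 1)‖ :=
    norm_nonneg _
  have he0 : (0 : ℝ) ≤ Real.exp (-c) := (Real.exp_pos _).le
  calc ‖damp n c l (eZ n (j : ℕ))‖ *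
      ‖(kParam g c).2.1 * ((kParam g c).2.1 + 2 * (kParam g c).2.2 - 1)‖
      ≤ Real.exp (-c) * (2 * ‖g‖ * (2 * ‖g‖ + 3) + ‖g‖ * Real.exp c) := by
        apply mul_le_mul h1 h2 hK0 he0
    _ = Real.exp (-c) * (2 * ‖g‖ * (2 * ‖g‖ + 3)) + ‖g‖ * (Real.exp (-c) * Real.exp c) := by
        ring
    _ ≤ 1 * (2 * ‖g‖ * (2 * ‖g‖ + 3)) + ‖g‖ * 1 := by
        rw [he2]
        have hgn : (0 : ℝ) ≤ 2 * ‖g‖ * (2 * ‖g‖ + 3) := by positivity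
        gcongr
    _ ≤ Bg g := by unfold Bg; nlinarith [norm_nonneg g]

lemma bound_type2 (g : ℂ) (c : ℝ) (hc : 0 ≤ c) (l : ℕ) (hl : 1 ≤ l) (j : Fin n) :
    ‖damp n c l ((2 : ℕ) • eZ n (j : ℕ))‖ *
      ‖4 * (kParam g c).2.2 * ((kParam g c).2.2 - 1)‖ ≤ Bg g := by
  have hK : ‖4 * (kParam g c).2.2 * ((kParam g c).2.2 - 1)‖ = Real.exp (2 * c) / 4 := by
    rw [kP2_eq, Complex.norm_real, Real.norm_eq_abs, abs_of_nonneg (by positivity)]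
  have hrp : rp ((2 : ℕ) • eZ n (j : ℕ)) = 2 * ((n : ℤ) - j) := rp_two_eZ j
  have hge : (2 : ℤ) ≤ rp ((2 : ℕ) • eZ n (j : ℕ)) := by
    rw [hrp]; have := j.isLt; omega
  have hd : ‖damp n c l ((2 : ℕ) • eZ n (j : ℕ))‖ ≤ Real.exp (-(2 * c)) := by
    rw [damp_norm]
    apply Real.exp_le_exp.mpr
    have h1 : (1 : ℝ) ≤ (l : ℝ) := by exact_mod_cast hl
    have h2 : (2 : ℝ) ≤ ((rp ((2 : ℕ) • eZ n (j : ℕ)) : ℤ) : ℝ) := by exact_mod_cast hge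
    have h3 : (2 : ℝ) ≤ (l : ℝ) * ((rp ((2 : ℕ) • eZ n (j : ℕ)) : ℤ) : ℝ) := by nlinarith
    nlinarith [mul_nonneg hc (by linarith : (0:ℝ) ≤ (l : ℝ) * ((rp ((2 : ℕ) • eZ n (j : ℕ)) : ℤ) : ℝ) - 2)]
  calc ‖damp n c l ((2 : ℕ) • eZ n (j : ℕ))‖ *
      ‖4 * (kParam g c).2.2 * ((kParam g c).2.2 - 1)‖
      ≤ Real.exp (-(2 * c)) * (Real.exp (2 * c) / 4) := by
        rw [hK]
        exact mul_le_mul_of_nonneg_right hd (by positivity)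
    _ = 1 / 4 := by
        rw [div_eq_mul_inv, ← mul_assoc, ← Real.exp_add]
        norm_num
    _ ≤ Bg g := by unfold Bg; nlinarith [norm_nonneg g]

lemma bound_type0 (g : ℂ) (c : ℝ) (hc : 0 ≤ c) (l : ℕ) (hl : 1 ≤ l) (α : Fin n → ℤ)
    (hα : 1 ≤ rp α) :
    ‖damp n c l α‖ * ‖2 * (kParam g c).1 * ((kParam g c).1 - 1)‖ ≤ Bg g := by
  have hK : ‖2 * (kParam g c).1 * ((kParam g c).1 - 1)‖ = 2 * Real.exp c := by
    rw [kP0_eq, Complex.norm_real, Real.norm_eq_abs, abs_of_nonneg (by positivity)]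
  have hd := damp_norm_le c hc l hl α hα
  calc ‖damp n c l α‖ * ‖2 * (kParam g c).1 * ((kParam g c).1 - 1)‖
      ≤ Real.exp (-c) * (2 * Real.exp c) := by
        rw [hK]
        exact mul_le_mul_of_nonneg_right hd (by positivity)
    _ = 2 := by
        rw [show Real.exp (-c) * (2 * Real.exp c) = 2 * (Real.exp (-c) * Real.exp c) by ring,
          ← Real.exp_add]
        norm_num
    _ ≤ Bg g := by unfold Bg; nlinarith [norm_nonneg g]

/-- The geometric-type series `∑ l e^{-εl}`. -/
def Sg (ε : ℝ) : ℝ := ∑' l : ℕ, (l : ℝ) * Real.exp (-ε) ^ l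

lemma Sg_nonneg (ε : ℝ) : 0 ≤ Sg ε :=
  tsum_nonneg fun l => by positivity

lemma sum_le_Sg (ε : ℝ) (hε : 0 < ε) (L : ℕ) :
    ∑ l ∈ Finset.Icc 1 L, (l : ℝ) * Real.exp (-(ε * l)) ≤ Sg ε := by
  have hr : ‖Real.exp (-ε)‖ < 1 := by
    rw [Real.norm_eq_abs, abs_of_pos (Real.exp_pos _)]
    exact Real.exp_lt_one_iff.mpr (by linarith)
  have hsum : Summable (fun l : ℕ => (l : ℝ) * Real.exp (-ε) ^ l) :=
    (hasSum_coe_mul_geometric_of_norm_lt_one hr).summable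
  have heq : ∀ l : ℕ, (l : ℝ) * Real.exp (-(ε * l)) = (l : ℝ) * Real.exp (-ε) ^ l := by
    intro l
    congr 1
    rw [← Real.exp_nat_mul]
    congr 1
    ring
  rw [Finset.sum_congr rfl fun l _ => heq l]
  exact Summable.sum_le_tsum _ (fun l _ => by positivity) hsum

lemma pc_re_eq (ξ : Fin n → ℂ) (ν : Fin n → ℤ) :
    (pc (zc ν - 2 • ξ) (zc ν)).re
      = ∑ j, (((ν j : ℝ)) ^ 2 - 2 * (ξ j).re * (ν j : ℝ)) := by
  unfold pc zc
  rw [Complex.re_sum]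
  apply Finset.sum_congr rfl
  intro j _
  have : ((fun j => ((ν j : ℂ))) - 2 • ξ) j = ((ν j : ℂ)) - 2 * ξ j := by
    simp [two_smul, two_mul]
  rw [this]
  simp [Complex.mul_re, Complex.sub_re, Complex.sub_im]
  ring

lemma pc_lower_bound (hn : 1 ≤ n) (ξ : Fin n → ℂ) {ν : Fin n → ℤ} (hν : dominant ν) :
    ∃ M : ℝ, 0 ≤ M ∧ ((rp ν : ℤ) : ℝ) ≤ (n : ℝ) ^ 2 * M ∧
      M ^ 2 - 2 * (∑ j, ‖ξ j‖) * M ≤ ‖pc (zc ν - 2 • ξ) (zc ν)‖ := by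
  have huniv : (Finset.univ : Finset (Fin n)).Nonempty := by
    exact Finset.univ_nonempty_iff.mpr (Fin.pos_iff_nonempty.mp (by omega))
  obtain ⟨j₀, -, hj₀⟩ := Finset.exists_max_image Finset.univ
    (fun j : Fin n => |(ν j : ℝ)|) huniv
  set M : ℝ := |(ν j₀ : ℝ)| with hM
  have hM0 : 0 ≤ M := abs_nonneg _
  refine ⟨M, hM0, ?_, ?_⟩
  · -- rp ν ≤ n² M
    have : ((rp ν : ℤ) : ℝ) = ∑ j, (ν j : ℝ) * ((n : ℝ) - (j : ℕ)) := by
      unfold rp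
      push_cast
      rfl
    rw [this]
    calc ∑ j, (ν j : ℝ) * ((n : ℝ) - (j : ℕ))
        ≤ ∑ _j : Fin n, M * n := by
          apply Finset.sum_le_sum
          intro j _
          have h1 : |(ν j : ℝ)| ≤ M := hj₀ j (Finset.mem_univ j)
          have h2 : (0 : ℝ) ≤ (n : ℝ) - (j : ℕ) := by
            have := j.isLt
            have : ((j : ℕ) : ℝ) ≤ (n : ℝ) := by exact_mod_cast this.le
            linarith
          have h3 : (n : ℝ) - (j : ℕ) ≤ n := by
            have : (0 : ℝ) ≤ ((j : ℕ) : ℝ) := Nat.cast_nonneg _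
            linarith
          calc (ν j : ℝ) * ((n : ℝ) - (j : ℕ))
              ≤ |(ν j : ℝ)| * ((n : ℝ) - (j : ℕ)) :=
                mul_le_mul_of_nonneg_right (le_abs_self _) h2
            _ ≤ M * n := mul_le_mul h1 h3 h2 hM0
      _ = (n : ℝ) * (M * n) := by
          rw [Finset.sum_const, Finset.card_univ, Fintype.card_fin, nsmul_eq_mul]
      _ = (n : ℝ) ^ 2 * M := by ring
  · -- M² − 2RM ≤ ‖pc‖
    have hre : M ^ 2 - 2 * (∑ j, ‖ξ j‖) * M ≤ (pc (zc ν - 2 • ξ) (zc ν)).re := by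
      rw [pc_re_eq]
      have h1 : M ^ 2 ≤ ∑ j, ((ν j : ℝ)) ^ 2 := by
        have := Finset.single_le_sum (f := fun j : Fin n => ((ν j : ℝ)) ^ 2)
          (fun j _ => sq_nonneg _) (Finset.mem_univ j₀)
        calc M ^ 2 = ((ν j₀ : ℝ)) ^ 2 := sq_abs _
          _ ≤ _ := this
      have h2 : ∑ j, (2 * (ξ j).re * (ν j : ℝ)) ≤ 2 * (∑ j, ‖ξ j‖) * M := by
        calc ∑ j, (2 * (ξ j).re * (ν j : ℝ))
            ≤ ∑ j, 2 * ‖ξ j‖ * M := by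
              apply Finset.sum_le_sum
              intro j _
              have ha : |(ξ j).re| ≤ ‖ξ j‖ := Complex.abs_re_le_norm _
              have hb : |(ν j : ℝ)| ≤ M := hj₀ j (Finset.mem_univ j)
              calc 2 * (ξ j).re * (ν j : ℝ)
                  ≤ |2 * (ξ j).re * (ν j : ℝ)| := le_abs_self _
                _ = 2 * |(ξ j).re| * |(ν j : ℝ)| := by
                    rw [abs_mul, abs_mul]
                    norm_num
                _ ≤ 2 * ‖ξ j‖ * M := by
                    have := norm_nonneg (ξ j)
                    have := abs_nonneg ((ν j : ℝ))
                    have := abs_nonneg ((ξ j).re)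
                    nlinarith
          _ = 2 * (∑ j, ‖ξ j‖) * M := by
              rw [Finset.mul_sum, Finset.sum_mul]
      calc M ^ 2 - 2 * (∑ j, ‖ξ j‖) * M
          ≤ (∑ j, ((ν j : ℝ)) ^ 2) - ∑ j, (2 * (ξ j).re * (ν j : ℝ)) := by linarith
        _ = ∑ j, (((ν j : ℝ)) ^ 2 - 2 * (ξ j).re * (ν j : ℝ)) := by
            rw [Finset.sum_sub_distrib]
    exact hre.trans (Complex.re_le_norm _)

lemma exists_delta (ξ : Fin n → ℂ) (hξ : ξ ∈ Uset n) (N : ℕ) :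
    ∃ δ : ℝ, 0 < δ ∧ ∀ ν : Fin n → ℤ, dominant ν → ν ≠ 0 → rp ν ≤ (N : ℤ) →
      δ ≤ ‖pc (zc ν - 2 • ξ) (zc ν)‖ := by
  classical
  set F : Finset (Fin n → ℤ) :=
    (Fintype.piFinset fun _ : Fin n => Finset.Icc (-(N : ℤ)) (N : ℤ)).filter
      (fun ν => dominant ν ∧ ν ≠ 0) with hF
  have hmemF : ∀ ν : Fin n → ℤ, dominant ν → ν ≠ 0 → rp ν ≤ (N : ℤ) → ν ∈ F := by
    intro ν h1 h2 h3
    rw [hF, Finset.mem_filter]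
    refine ⟨?_, h1, h2⟩
    rw [Fintype.mem_piFinset]
    intro j
    rw [Finset.mem_Icc]
    have := abs_entry_le_rp h1 j
    have h0 := rp_nonneg h1
    rw [abs_le] at this
    omega
  by_cases hne : F.Nonempty
  · refine ⟨F.inf' hne (fun ν => ‖pc (zc ν - 2 • ξ) (zc ν)‖), ?_, ?_⟩
    · obtain ⟨ν₀, hν₀, heq⟩ := Finset.exists_mem_eq_inf' hne
        (fun ν => ‖pc (zc ν - 2 • ξ) (zc ν)‖)
      rw [hF, Finset.mem_filter] at hν₀
      rw [heq]
      exact norm_pos_iff.mpr (hξ ν₀ hν₀.2.1 hν₀.2.2)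
    · intro ν h1 h2 h3
      exact Finset.inf'_le _ (hmemF ν h1 h2 h3)
  · refine ⟨1, one_pos, ?_⟩
    intro ν h1 h2 h3
    exact absurd (hmemF ν h1 h2 h3) (fun h => hne ⟨ν, h⟩)

lemma inner_bound (g : ℂ) (c : ℝ) (hc : 0 ≤ c) (ε : ℝ)
    (a : (Fin n → ℤ) → ℂ) (ν : Fin n → ℤ) (P : ℝ) (hP : 0 ≤ P)
    (l : ℕ) (hl : 1 ≤ l)
    (hpred : ∀ μ : Fin n → ℤ, rp μ + l ≤ rp ν → ‖a μ‖ ≤ P * Real.exp (-(ε * l))) :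
    ‖(∑ j : Fin n, damp n c l (eZ n (j : ℕ)) *
        ((kParam g c).2.1 * ((kParam g c).2.1 + 2 * (kParam g c).2.2 - 1)) *
        a (ν - l • eZ n (j : ℕ)))
      + (∑ j : Fin n, damp n c l (2 • eZ n (j : ℕ)) *
          (4 * (kParam g c).2.2 * ((kParam g c).2.2 - 1)) *
          a (ν - l • (2 • eZ n (j : ℕ))))
      + ∑ j : Fin n, ∑ j' ∈ Finset.Ioi j,
          (damp n c l (eZ n (j : ℕ) + eZ n (j' : ℕ)) *
              (2 * (kParam g c).1 * ((kParam g c).1 - 1)) *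
              a (ν - l • (eZ n (j : ℕ) + eZ n (j' : ℕ)))
            + damp n c l (eZ n (j : ℕ) - eZ n (j' : ℕ)) *
                (2 * (kParam g c).1 * ((kParam g c).1 - 1)) *
                a (ν - l • (eZ n (j : ℕ) - eZ n (j' : ℕ))))‖
      ≤ (2 * n + 2 * n ^ 2) * Bg g * (P * Real.exp (-(ε * l))) := by
  set E : ℝ := P * Real.exp (-(ε * l)) with hEdef
  have hE : 0 ≤ E := by positivity
  have hB := Bg_pos g
  -- generic atom bound
  have hatom : ∀ (α : Fin n → ℤ) (K : ℂ), 1 ≤ rp α →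
      ‖damp n c l α‖ * ‖K‖ ≤ Bg g →
      ‖damp n c l α * K * a (ν - l • α)‖ ≤ Bg g * E := by
    intro α K hα hdk
    rw [norm_mul, norm_mul]
    have hμ : rp (ν - l • α) + l ≤ rp ν := by
      rw [rp_sub_nsmul]
      have h := mul_le_mul_of_nonneg_left hα (Int.ofNat_nonneg l)
      rw [mul_one] at h
      omega
    exact mul_le_mul hdk (hpred _ hμ) (norm_nonneg _) hB.le
  have hS1 : ‖∑ j : Fin n, damp n c l (eZ n (j : ℕ)) *
      ((kParam g c).2.1 * ((kParam g c).2.1 + 2 * (kParam g c).2.2 - 1)) *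
      a (ν - l • eZ n (j : ℕ))‖ ≤ (n : ℝ) * (Bg g * E) := by
    refine (norm_sum_le _ _).trans ?_
    calc ∑ j : Fin n, ‖damp n c l (eZ n (j : ℕ)) *
        ((kParam g c).2.1 * ((kParam g c).2.1 + 2 * (kParam g c).2.2 - 1)) *
        a (ν - l • eZ n (j : ℕ))‖
        ≤ ∑ _j : Fin n, Bg g * E :=
          Finset.sum_le_sum fun j _ =>
            hatom _ _ (rp_eZ_pos j) (bound_type1 g c hc l hl j)
      _ = (n : ℝ) * (Bg g * E) := by
          rw [Finset.sum_const, Finset.card_univ, Fintype.card_fin, nsmul_eq_mul]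
  have hS2 : ‖∑ j : Fin n, damp n c l (2 • eZ n (j : ℕ)) *
      (4 * (kParam g c).2.2 * ((kParam g c).2.2 - 1)) *
      a (ν - l • (2 • eZ n (j : ℕ)))‖ ≤ (n : ℝ) * (Bg g * E) := by
    refine (norm_sum_le _ _).trans ?_
    calc ∑ j : Fin n, ‖damp n c l (2 • eZ n (j : ℕ)) *
        (4 * (kParam g c).2.2 * ((kParam g c).2.2 - 1)) *
        a (ν - l • (2 • eZ n (j : ℕ)))‖
        ≤ ∑ _j : Fin n, Bg g * E := by
          refine Finset.sum_le_sum fun j _ => hatom _ _ ?_ (bound_type2 g c hc l hl j)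
          rw [rp_two_eZ j]
          have := j.isLt
          omega
      _ = (n : ℝ) * (Bg g * E) := by
          rw [Finset.sum_const, Finset.card_univ, Fintype.card_fin, nsmul_eq_mul]
  have hS3 : ‖∑ j : Fin n, ∑ j' ∈ Finset.Ioi j,
      (damp n c l (eZ n (j : ℕ) + eZ n (j' : ℕ)) *
          (2 * (kParam g c).1 * ((kParam g c).1 - 1)) *
          a (ν - l • (eZ n (j : ℕ) + eZ n (j' : ℕ)))
        + damp n c l (eZ n (j : ℕ) - eZ n (j' : ℕ)) *
            (2 * (kParam g c).1 * ((kParam g c).1 - 1)) *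
            a (ν - l • (eZ n (j : ℕ) - eZ n (j' : ℕ))))‖
      ≤ (n : ℝ) * ((n : ℝ) * (2 * (Bg g * E))) := by
    refine (norm_sum_le _ _).trans ?_
    have hin : ∀ j : Fin n, ‖∑ j' ∈ Finset.Ioi j,
        (damp n c l (eZ n (j : ℕ) + eZ n (j' : ℕ)) *
            (2 * (kParam g c).1 * ((kParam g c).1 - 1)) *
            a (ν - l • (eZ n (j : ℕ) + eZ n (j' : ℕ)))
          + damp n c l (eZ n (j : ℕ) - eZ n (j' : ℕ)) *
              (2 * (kParam g c).1 * ((kParam g c).1 - 1)) *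
              a (ν - l • (eZ n (j : ℕ) - eZ n (j' : ℕ))))‖
        ≤ (n : ℝ) * (2 * (Bg g * E)) := by
      intro j
      refine (norm_sum_le _ _).trans ?_
      calc ∑ j' ∈ Finset.Ioi j, ‖damp n c l (eZ n (j : ℕ) + eZ n (j' : ℕ)) *
            (2 * (kParam g c).1 * ((kParam g c).1 - 1)) *
            a (ν - l • (eZ n (j : ℕ) + eZ n (j' : ℕ)))
          + damp n c l (eZ n (j : ℕ) - eZ n (j' : ℕ)) *
              (2 * (kParam g c).1 * ((kParam g c).1 - 1)) *
              a (ν - l • (eZ n (j : ℕ) - eZ n (j' : ℕ)))‖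
          ≤ ∑ _j' ∈ Finset.Ioi j, 2 * (Bg g * E) := by
            refine Finset.sum_le_sum fun j' hj' => ?_
            have hjj' : j < j' := Finset.mem_Ioi.mp hj'
            refine (norm_add_le _ _).trans ?_
            have h1 := hatom _ (2 * (kParam g c).1 * ((kParam g c).1 - 1))
              (rp_sum_eZ_pos j j') (bound_type0 g c hc l hl _ (rp_sum_eZ_pos j j'))
            have h2 := hatom _ (2 * (kParam g c).1 * ((kParam g c).1 - 1))
              (rp_diff_eZ_pos j j' hjj') (bound_type0 g c hc l hl _ (rp_diff_eZ_pos j j' hjj'))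
            linarith
        _ ≤ (n : ℝ) * (2 * (Bg g * E)) := by
            rw [Finset.sum_const, nsmul_eq_mul]
            have hcard : ((Finset.Ioi j).card : ℝ) ≤ (n : ℝ) := by
              have h' : (Finset.Ioi j).card ≤ n := by
                simpa using Finset.card_le_univ (Finset.Ioi j)
              exact_mod_cast h'
            exact mul_le_mul_of_nonneg_right hcard (by positivity)
    calc ∑ j : Fin n, ‖∑ j' ∈ Finset.Ioi j, _‖
        ≤ ∑ _j : Fin n, (n : ℝ) * (2 * (Bg g * E)) :=
          Finset.sum_le_sum fun j _ => hin j
      _ = (n : ℝ) * ((n : ℝ) * (2 * (Bg g * E))) := by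
          rw [Finset.sum_const, Finset.card_univ, Fintype.card_fin, nsmul_eq_mul]
  calc ‖_ + _ + _‖ ≤ ‖_ + _‖ + ‖_‖ := norm_add_le _ _
    _ ≤ ‖_‖ + ‖_‖ + ‖_‖ := by
        have := norm_add_le (E := ℂ)
        gcongr
        exact norm_add_le _ _
    _ ≤ (n : ℝ) * (Bg g * E) + (n : ℝ) * (Bg g * E)
        + (n : ℝ) * ((n : ℝ) * (2 * (Bg g * E))) := by
        exact add_le_add (add_le_add hS1 hS2) hS3
    _ = (2 * n + 2 * n ^ 2) * Bg g * E := by ring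

lemma csRHS_norm_le (g : ℂ) (c : ℝ) (hc : 0 ≤ c) (ε : ℝ) (hε : 0 < ε)
    (a : (Fin n → ℤ) → ℂ) (ν : Fin n → ℤ) (P : ℝ) (hP : 0 ≤ P)
    (hpred : ∀ l : ℕ, 1 ≤ l → ∀ μ : Fin n → ℤ, rp μ + l ≤ rp ν →
      ‖a μ‖ ≤ P * Real.exp (-(ε * l))) :
    ‖csRHS (kParam g c) c a ν‖ ≤ (2 * n + 2 * n ^ 2) * Bg g * P * Sg ε := by
  have hB := Bg_pos g
  unfold csRHS
  refine le_trans (norm_sum_le _ _) (le_trans (Finset.sum_le_sum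
    (g := fun l : ℕ => (2 * (n : ℝ) + 2 * (n : ℝ) ^ 2) * Bg g * P *
      ((l : ℝ) * Real.exp (-(ε * l)))) fun l hl => ?_) ?_)
  · have hl1 : 1 ≤ l := (Finset.mem_Icc.mp hl).1
    rw [norm_mul, Complex.norm_natCast]
    have hib := inner_bound g c hc ε a ν P hP l hl1 (hpred l hl1)
    calc (l : ℝ) * ‖_‖ ≤ (l : ℝ) * ((2 * n + 2 * n ^ 2) * Bg g * (P * Real.exp (-(ε * l)))) :=
          mul_le_mul_of_nonneg_left hib (Nat.cast_nonneg l)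
      _ = (2 * (n : ℝ) + 2 * (n : ℝ) ^ 2) * Bg g * P * ((l : ℝ) * Real.exp (-(ε * l))) := by
          ring
  · rw [← Finset.mul_sum]
    exact mul_le_mul_of_nonneg_left (sum_le_Sg ε hε _) (by positivity)

end Aux17

/-- Uniform growth bound for the rescaled Calogero–Sutherland Harish-Chandra coefficients:
for every `ε > 0` there is `A > 0` with `|â^{cs}_ν(ξ;k^{(c)})| ≤ A e^{ε⟨ν,ρ⟩}` for all
`c ≥ 0` and all `ν ≥ 0`. -/
theorem statement17 (n : ℕ) (hn : 1 ≤ n)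
    (U : Set (Fin n → ℂ)) (hUo : IsOpen U) (hUb : Bornology.IsBounded U)
    (hUc : IsConnected U) (g : ℂ)
    (T : Finset (Fin n → ℤ))
    (hT : ∀ μ : Fin n → ℤ, μ ∈ T ↔ dominant μ ∧ μ ≠ 0 ∧
        ∃ ζ ∈ closure U, pc (zc μ - 2 • ζ) (zc μ) = 0)
    (ξ : Fin n → ℂ) (hξU : ξ ∈ U) (hξ : ξ ∈ Uset n)
    (ahat : ℝ → (Fin n → ℤ) → ℂ)
    (hahat : ∀ c : ℝ, 0 ≤ c →
      IsHCcsResc (kParam g c) c (∏ μ ∈ T, pc (zc μ - 2 • ξ) (zc μ)) ξ (ahat c))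
    (ε : ℝ) (hε : 0 < ε) :
    ∃ A : ℝ, 0 < A ∧ ∀ c : ℝ, 0 ≤ c → ∀ ν : Fin n → ℤ, dominant ν →
      ‖ahat c ν‖ ≤ A * Real.exp (ε * ((rp ν : ℝ))) := by
  classical
  set Δ : ℂ := ∏ μ ∈ T, pc (zc μ - 2 • ξ) (zc μ) with hΔ
  set R : ℝ := ∑ j, ‖ξ j‖ with hRdef
  have hR0 : 0 ≤ R := Finset.sum_nonneg fun j _ => norm_nonneg _
  set C₁ : ℝ := (2 * n + 2 * n ^ 2) * Bg g * Sg ε with hC₁def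
  have hC₁0 : 0 ≤ C₁ :=
    mul_nonneg (mul_nonneg (by positivity) (Bg_pos g).le) (Sg_nonneg ε)
  set N : ℕ := ⌈(n : ℝ) ^ 2 * (2 * R + C₁ + 1)⌉₊ with hNdef
  have hNge : (n : ℝ) ^ 2 * (2 * R + C₁ + 1) ≤ (N : ℝ) := Nat.le_ceil _
  obtain ⟨δ, hδ0, hδ⟩ := exists_delta ξ hξ N
  set A₀ : ℝ := ‖Δ‖ + 1 with hA₀def
  have hA₀0 : 0 < A₀ := by positivity
  set D : ℝ := max (δ⁻¹ * (C₁ + 1)) 1 with hDdef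
  have hD1 : (1 : ℝ) ≤ D := le_max_right _ _
  have hD0 : (0 : ℝ) < D := lt_of_lt_of_le one_pos hD1
  have key : ∀ m : ℕ, ∀ c : ℝ, 0 ≤ c → ∀ ν : Fin n → ℤ, dominant ν → rp ν = (m : ℤ) →
      ‖ahat c ν‖ ≤ A₀ * D ^ (min m N) * Real.exp (ε * m) := by
    intro m
    induction m using Nat.strong_induction_on with
    | _ m IH =>
      intro c hc ν hdom hrp
      rcases Nat.eq_zero_or_pos m with rfl | hm
      · have hν0 : ν = 0 := eq_zero_of_rp_eq_zero hdom (by exact_mod_cast hrp)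
        rw [hν0, (hahat c hc).1]
        have h1 : min 0 N = 0 := Nat.zero_min N
        rw [h1, pow_zero]
        simp only [Nat.cast_zero, mul_zero, Real.exp_zero, mul_one]
        rw [hA₀def]
        linarith [norm_nonneg Δ]
      · have hν0 : ν ≠ 0 := by
          intro h
          rw [h] at hrp
          have h0 : rp (0 : Fin n → ℤ) = 0 := by simp [rp]
          rw [h0] at hrp
          omega
        have hpc : pc (zc ν - 2 • ξ) (zc ν) ≠ 0 := hξ ν hdom hν0
        have hrec := (hahat c hc).2.2 ν hdom hν0
        set P : ℝ := A₀ * D ^ (min (m - 1) N) * Real.exp (ε * m) with hPdef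
        have hP0 : 0 ≤ P := by positivity
        have hpred : ∀ l : ℕ, 1 ≤ l → ∀ μ : Fin n → ℤ, rp μ + l ≤ rp ν →
            ‖ahat c μ‖ ≤ P * Real.exp (-(ε * l)) := by
          intro l hl μ hμ
          by_cases hdμ : dominant μ
          · have h0 : 0 ≤ rp μ := rp_nonneg hdμ
            have hm' : rp μ = ((rp μ).toNat : ℤ) := (Int.toNat_of_nonneg h0).symm
            set m' : ℕ := (rp μ).toNat with hm'def
            have hlm : m' + l ≤ m := by
              rw [hrp] at hμ
              omega
            have hlt : m' < m := by omega
            have hIH := IH m' hlt c hc μ hdμ hm'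
            have e1 : D ^ (min m' N) ≤ D ^ (min (m - 1) N) :=
              pow_le_pow_right₀ hD1 (min_le_min_right N (by omega))
            have e2 : Real.exp (ε * m') ≤ Real.exp (ε * ((m : ℝ) - l)) := by
              apply Real.exp_le_exp.mpr
              apply mul_le_mul_of_nonneg_left _ hε.le
              have : ((m' + l : ℕ) : ℝ) ≤ (m : ℝ) := by exact_mod_cast hlm
              push_cast at this
              linarith
            have hsplit : Real.exp (ε * ((m : ℝ) - l))
                = Real.exp (ε * m) * Real.exp (-(ε * l)) := by
              rw [← Real.exp_add]
              congr 1
              ring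
            calc ‖ahat c μ‖ ≤ A₀ * D ^ (min m' N) * Real.exp (ε * m') := hIH
              _ ≤ A₀ * D ^ (min (m - 1) N) * Real.exp (ε * ((m : ℝ) - l)) := by
                  apply mul_le_mul _ e2 (Real.exp_pos _).le (by positivity)
                  exact mul_le_mul_of_nonneg_left e1 hA₀0.le
              _ = P * Real.exp (-(ε * l)) := by
                  rw [hsplit, hPdef]
                  ring
          · rw [(hahat c hc).2.1 μ hdμ, norm_zero]
            positivity
        have hbound := csRHS_norm_le g c hc ε hε (ahat c) ν P hP0 hpred
        have hbound' : ‖csRHS (kParam g c) c (ahat c) ν‖ ≤ C₁ * P := by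
          refine hbound.trans_eq ?_
          rw [hC₁def]
          ring
        have hval : ‖ahat c ν‖
            = ‖csRHS (kParam g c) c (ahat c) ν‖ / ‖pc (zc ν - 2 • ξ) (zc ν)‖ := by
          rw [← hrec, norm_mul]
          rw [mul_comm, mul_div_assoc, div_self (norm_ne_zero_iff.mpr hpc), mul_one]
        rw [hval]
        have hpcpos : 0 < ‖pc (zc ν - 2 • ξ) (zc ν)‖ := norm_pos_iff.mpr hpc
        by_cases hcase : m ≤ N
        · have hpc_low : δ ≤ ‖pc (zc ν - 2 • ξ) (zc ν)‖ := by
            apply hδ ν hdom hν0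
            rw [hrp]
            exact_mod_cast hcase
          have hminm : min (m - 1) N + 1 = min m N := by omega
          calc ‖csRHS (kParam g c) c (ahat c) ν‖ / ‖pc (zc ν - 2 • ξ) (zc ν)‖
              ≤ (C₁ * P) / δ := div_le_div₀ (by positivity) hbound' hδ0 hpc_low
            _ = (δ⁻¹ * C₁) * P := by
                rw [div_eq_mul_inv]
                ring
            _ ≤ D * P := by
                apply mul_le_mul_of_nonneg_right _ hP0
                calc δ⁻¹ * C₁ ≤ δ⁻¹ * (C₁ + 1) := by
                      apply mul_le_mul_of_nonneg_left (by linarith) (by positivity)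
                  _ ≤ D := le_max_left _ _
            _ = A₀ * D ^ (min (m - 1) N + 1) * Real.exp (ε * m) := by
                rw [hPdef, pow_succ]
                ring
            _ = A₀ * D ^ (min m N) * Real.exp (ε * m) := by rw [hminm]
        · -- large m : use the quadratic lower bound on ‖pc‖
          have hpclow : C₁ + 1 ≤ ‖pc (zc ν - 2 • ξ) (zc ν)‖ := by
            obtain ⟨M, hM0, hM1, hM2⟩ := pc_lower_bound hn ξ hdom
            have hmN : (N : ℝ) ≤ (m : ℝ) := by
              have : N ≤ m := by omega
              exact_mod_cast this
            have hrpm : ((rp ν : ℤ) : ℝ) = (m : ℝ) := by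
              rw [hrp]
              push_cast
              rfl
            have hn2 : (0 : ℝ) < (n : ℝ) ^ 2 := by
              have : (1 : ℝ) ≤ (n : ℝ) := by exact_mod_cast hn
              positivity
            have hMge : 2 * R + C₁ + 1 ≤ M := by
              have h1 : (n : ℝ) ^ 2 * (2 * R + C₁ + 1) ≤ (n : ℝ) ^ 2 * M := by
                rw [hrpm] at hM1
                linarith
              exact le_of_mul_le_mul_left h1 hn2
            have hM1' : (1 : ℝ) ≤ M := by linarith
            nlinarith [hM2, hMge, hM1', hR0, hC₁0]
          have hminm : min (m - 1) N = min m N := by omega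
          calc ‖csRHS (kParam g c) c (ahat c) ν‖ / ‖pc (zc ν - 2 • ξ) (zc ν)‖
              ≤ (C₁ * P) / (C₁ + 1) :=
                div_le_div₀ (by positivity) hbound' (by linarith) hpclow
            _ ≤ P := by
                rw [div_le_iff₀ (by linarith : (0:ℝ) < C₁ + 1)]
                nlinarith
            _ = A₀ * D ^ (min m N) * Real.exp (ε * m) := by
                rw [hPdef, hminm]
  refine ⟨A₀ * D ^ N, by positivity, ?_⟩
  intro c hc ν hdom
  have h0 := rp_nonneg hdom
  have hm : rp ν = ((rp ν).toNat : ℤ) := (Int.toNat_of_nonneg h0).symm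
  have hkey := key (rp ν).toNat c hc ν hdom hm
  have hexp : Real.exp (ε * ((rp ν).toNat : ℝ)) = Real.exp (ε * ((rp ν : ℤ) : ℝ)) := by
    congr 1
    rw [hm]
    push_cast
    rfl
  calc ‖ahat c ν‖ ≤ A₀ * D ^ (min (rp ν).toNat N) * Real.exp (ε * ((rp ν).toNat : ℝ)) :=
        hkey
    _ ≤ A₀ * D ^ N * Real.exp (ε * ((rp ν : ℤ) : ℝ)) := by
        rw [hexp]
        apply mul_le_mul_of_nonneg_right _ (Real.exp_pos _).le
        exact mul_le_mul_of_nonneg_left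
          (pow_le_pow_right₀ hD1 (min_le_right _ _)) hA₀0.le

end TodaBC
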